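/- arXiv:0810.2746 — 2 statements merged into one kernel-verified Lean document; each statement's English description precedes it below -/
import Mathlib

section
/- For c > 0 and r ∈ (0,1), the finite-SNR diversity d(r,E) = c(1 + rE(1+E)^{r−1} − (1+E)^r)/(E(1 − exp(c((1+E)^r − 1)/E))) is nonnegative for all E > 0. -/
open Real

theorem anc_diversity_nonneg
    (c r : ℝ) (hc : 0 < c) (hr0 : 0 < r) (hr1 : r < 1) :
    ∀ E : ℝ, 0 < E →
      0 ≤ c * (1 + r * E * (1 + E) ^ (r - 1) - (1 + E) ^ r) /
          (E * (1 - Real.exp (c * ((1 + E) ^ r - 1) / E))) := by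
  intro E hE
  have hA : (0:ℝ) < 1 + E := by linarith
  have hA1 : (1:ℝ) < 1 + E := by linarith
  -- Bernoulli with s = -E/(1+E)
  have hs : (-1:ℝ) ≤ -E / (1 + E) := by
    rw [neg_div, neg_le_neg_iff, div_le_one hA]; linarith
  have hbern := rpow_one_add_le_one_add_mul_self hs hr0.le hr1.le
  have h1s : 1 + -E / (1 + E) = (1 + E)⁻¹ := by field_simp; ring
  rw [h1s, Real.inv_rpow hA.le] at hbern
  -- hbern : ((1+E)^r)⁻¹ ≤ 1 + r * (-E/(1+E))
  have hAr : (0:ℝ) < (1 + E) ^ r := Real.rpow_pos_of_pos hA r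
  have hkey : 1 + r * E * (1 + E) ^ (r - 1) ≤ (1 + E) ^ r := by
    have hsub : (1 + E) ^ (r - 1) = (1 + E) ^ r / (1 + E) := by
      rw [Real.rpow_sub hA, Real.rpow_one]
    rw [hsub]
    have := mul_le_mul_of_nonneg_left hbern hAr.le
    rw [inv_eq_one_div, mul_one_div, div_self hAr.ne'] at this
    rw [mul_add, mul_one] at this
    have h2 : (1+E)^r * (r * (-E / (1 + E))) = -(r * E * ((1+E)^r / (1+E))) := by
      ring
    rw [h2] at this
    linarith
  have hnum : c * (1 + r * E * (1 + E) ^ (r - 1) - (1 + E) ^ r) ≤ 0 :=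
    mul_nonpos_of_nonneg_of_nonpos hc.le (by linarith)
  have hArgt : (1:ℝ) < (1 + E) ^ r := Real.one_lt_rpow hA1 hr0
  have hexp : 1 < Real.exp (c * ((1 + E) ^ r - 1) / E) := by
    exact Real.one_lt_exp_iff.mpr (div_pos (mul_pos hc (by linarith)) hE)
  have hden : E * (1 - Real.exp (c * ((1 + E) ^ r - 1) / E)) ≤ 0 :=
    mul_nonpos_of_nonneg_of_nonpos hE.le (by linarith)
  exact div_nonneg_of_nonpos hnum hden
end

section
/- Let μ₁(E) = 2(Ωh+Ωf)(E/(2√(1+E)) + 1 − √(1+E)) / (EΩhΩf(1 − c₁(E))) with c₁(E) = exp(2(Ωh+Ωf)(√(1+E) − 1)/(EΩhΩf)). Then μ₁(E) → 1/2 as E → ∞. -/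
open Real Filter

theorem mu1_tendsto_half
    (Ωh Ωf : ℝ) (hΩh : 0 < Ωh) (hΩf : 0 < Ωf) :
    Tendsto
      (fun E : ℝ =>
        2 * (Ωh + Ωf) * (E / (2 * Real.sqrt (1 + E)) + 1 - Real.sqrt (1 + E)) /
          (E * Ωh * Ωf *
            (1 - Real.exp (2 * (Ωh + Ωf) * (Real.sqrt (1 + E) - 1) / (E * Ωh * Ωf)))))
      atTop (nhds (1/2)) := by
  have hD : (0:ℝ) < Ωh * Ωf := mul_pos hΩh hΩf
  have hc : (0:ℝ) < Ωh + Ωf := by linarith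
  set xF : ℝ → ℝ := fun E => 2 * (Ωh + Ωf) / (Ωh * Ωf * (Real.sqrt (1 + E) + 1)) with hxF
  -- sqrt (1+E) → ∞
  have hs_top : Tendsto (fun E : ℝ => Real.sqrt (1 + E)) atTop atTop := by
    apply tendsto_atTop_atTop.2
    intro b
    refine ⟨b ^ 2, fun a ha => ?_⟩
    calc b ≤ |b| := le_abs_self b
    _ = Real.sqrt (b ^ 2) := (Real.sqrt_sq_eq_abs b).symm
    _ ≤ Real.sqrt (1 + a) := Real.sqrt_le_sqrt (by linarith)
  -- xF → 0
  have hx0 : Tendsto xF atTop (nhds 0) := by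
    apply Tendsto.div_atTop tendsto_const_nhds
    apply Tendsto.const_mul_atTop hD
    exact tendsto_atTop_add_const_right _ 1 hs_top
  -- eventually xF E > 0
  have hx_pos : ∀ᶠ E : ℝ in atTop, 0 < xF E := by
    filter_upwards [eventually_ge_atTop (0:ℝ)] with E hE
    have h1 : (0:ℝ) ≤ Real.sqrt (1 + E) := Real.sqrt_nonneg _
    exact div_pos (by linarith) (mul_pos hD (by linarith))
  -- (exp t - 1)/t → 1 as t → 0 (t ≠ 0)
  have hg : Tendsto (fun t : ℝ => (Real.exp t - 1) / t) (nhdsWithin 0 {(0:ℝ)}ᶜ) (nhds 1) := by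
    have h := Real.hasDerivAt_exp 0
    rw [hasDerivAt_iff_tendsto_slope] at h
    simpa [slope_fun_def_field, Real.exp_zero] using h
  have hgx : Tendsto (fun E => (Real.exp (xF E) - 1) / xF E) atTop (nhds 1) := by
    apply hg.comp
    rw [tendsto_nhdsWithin_iff]
    exact ⟨hx0, hx_pos.mono fun E hE => ne_of_gt hE⟩
  -- (1 - 1/sqrt(1+E))/2 → 1/2
  have hA : Tendsto (fun E : ℝ => (1 - 1 / Real.sqrt (1 + E)) / 2) atTop (nhds (1/2)) := by
    have h1 : Tendsto (fun E : ℝ => 1 / Real.sqrt (1 + E)) atTop (nhds 0) :=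
      Tendsto.div_atTop tendsto_const_nhds hs_top
    have h2 : Tendsto (fun E : ℝ => (1:ℝ) - 1 / Real.sqrt (1 + E)) atTop (nhds (1 - 0)) :=
      tendsto_const_nhds.sub h1
    have := h2.div_const 2
    norm_num at this
    convert this using 2
    norm_num
  have hT : Tendsto (fun E : ℝ =>
      ((1 - 1 / Real.sqrt (1 + E)) / 2) / ((Real.exp (xF E) - 1) / xF E)) atTop (nhds (1/2)) := by
    have := hA.div hgx one_ne_zero
    simpa only [div_one, Pi.div_def] using this
  apply hT.congr'
  -- eventual equality
  filter_upwards [eventually_gt_atTop (0:ℝ), hx_pos] with E hE hxE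
  have hs0 : (0:ℝ) ≤ 1 + E := by linarith
  set s := Real.sqrt (1 + E) with hsdef
  have hs2 : s ^ 2 = 1 + E := Real.sq_sqrt hs0
  have hs1 : 1 < s := by
    nlinarith [Real.sqrt_nonneg (1 + E)]
  -- rewrite the exp argument
  have hsne' : Real.sqrt (1 + E) = s := hsdef.symm
  have harg : 2 * (Ωh + Ωf) * (s - 1) / (E * Ωh * Ωf) = xF E := by
    simp only [hxF, hsne']
    rw [div_eq_div_iff (by positivity) (by positivity)]
    linear_combination (2 * (Ωh + Ωf) * Ωh * Ωf) * hs2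
  have hxne : xF E ≠ 0 := ne_of_gt hxE
  have heX : Real.exp (xF E) ≠ 1 :=
    ne_of_gt (Real.one_lt_exp_iff.mpr hxE)
  clear_value s
  have hEeq : E = s ^ 2 - 1 := by linarith [hs2]
  subst hEeq
  rw [harg]
  set y := xF (s ^ 2 - 1) with hy
  set eX := Real.exp y with heXdef
  have hy' : y = 2 * (Ωh + Ωf) / (Ωh * Ωf * (s + 1)) := by
    simp only [hy, hxF]
    rw [← hsdef]
  have h1 : eX - 1 ≠ 0 := sub_ne_zero.2 heX
  have hs_ne : s ≠ 0 := by linarith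
  have hsp1 : s + 1 ≠ 0 := by linarith
  have hE_ne : s ^ 2 - 1 ≠ 0 := by nlinarith
  have h1' : 1 - eX ≠ 0 := fun h => heX (by linarith [sub_eq_zero.mp h])
  rw [hy']
  field_simp
  ring
end
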